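/- arXiv:2208.00450 — 3 statements merged into one kernel-verified Lean document; each statement's English description precedes it below -/
import Mathlib

section
/- Let G be a Hermitian complex N×N matrix with G² = I, let A be a Hermitian complex N×N matrix, and let ψ ∈ ℂ^N. Define f(θ) = ⟨exp(−i(θ/2)·G) ψ, A · exp(−i(θ/2)·G) ψ⟩ (the expectation value of the observable A after the rotation gate exp(−iθG/2)). Then there exist real constants a, b, c such that f(θ) = a·cos θ + b·sin θ + c for all real θ. -/
open Matrix

lemma exp_smul_involution (N : ℕ) (G : Matrix (Fin N) (Fin N) ℂ) (hG2 : G ^ 2 = 1) (t : ℂ) :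
    NormedSpace.exp (t • G) = Complex.cosh t • (1 : Matrix (Fin N) (Fin N) ℂ) + Complex.sinh t • G := by
  rw [NormedSpace.exp_eq_tsum ℂ]
  refine HasSum.tsum_eq ?_
  refine HasSum.even_add_odd ?_ ?_
  · convert ((Complex.hasSum_cosh t).smul_const (1 : Matrix (Fin N) (Fin N) ℂ)) using 2 with n
    case e'_3 => rfl
    rw [smul_pow, pow_mul G 2 n, hG2, one_pow, smul_smul]
    congr 1
    rw [div_eq_mul_inv, mul_comm]
  · convert ((Complex.hasSum_sinh t).smul_const G) using 2 with n
    case e'_3 => rfl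
    rw [smul_pow, pow_succ G, pow_mul G 2 n, hG2, one_pow, one_mul, smul_smul]
    congr 1
    rw [div_eq_mul_inv, mul_comm]

/-- The expectation value `f(θ) = ⟨e^{-iθG/2} ψ, A e^{-iθG/2} ψ⟩` of a Hermitian observable `A`
after a rotation gate generated by a Hermitian involution `G` (with `G² = I`) is of the form
`a cos θ + b sin θ + c` for real constants `a`, `b`, `c`. -/
theorem expectation_rotation_sinusoidal (N : ℕ) (G A : Matrix (Fin N) (Fin N) ℂ)
    (hG : G.IsHermitian) (hG2 : G ^ 2 = 1) (hA : A.IsHermitian) (ψ : Fin N → ℂ) :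
    ∃ a b c : ℝ, ∀ θ : ℝ,
      star ((NormedSpace.exp ((-(Complex.I * ((θ : ℂ) / 2))) • G)).mulVec ψ) ⬝ᵥ
          (A.mulVec ((NormedSpace.exp ((-(Complex.I * ((θ : ℂ) / 2))) • G)).mulVec ψ)) =
        ((a * Real.cos θ + b * Real.sin θ + c : ℝ) : ℂ) := by
  set φ : Fin N → ℂ := G.mulVec ψ with hφ
  set z11 : ℂ := star ψ ⬝ᵥ A.mulVec ψ with hz11
  set z22 : ℂ := star φ ⬝ᵥ A.mulVec φ with hz22
  set z12 : ℂ := star ψ ⬝ᵥ A.mulVec φ with hz12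
  set z21 : ℂ := star φ ⬝ᵥ A.mulVec ψ with hz21
  have hAconj : ∀ x y : Fin N → ℂ, star (star x ⬝ᵥ A.mulVec y) = star y ⬝ᵥ A.mulVec x := by
    intro x y
    rw [← star_dotProduct, star_mulVec, hA.eq, dotProduct_mulVec]
  have h11 : z11 = (z11.re : ℂ) := by
    have := hAconj ψ ψ
    rw [← hz11] at this
    exact (Complex.conj_eq_iff_re.mp this).symm
  have h22 : z22 = (z22.re : ℂ) := by
    have := hAconj φ φ
    rw [← hz22] at this
    exact (Complex.conj_eq_iff_re.mp this).symm
  have h21 : z21 = star z12 := by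
    rw [hz21, hz12, ← hAconj ψ φ]
  refine ⟨(z11.re - z22.re) / 2, z12.im, (z11.re + z22.re) / 2, fun θ => ?_⟩
  have hexp := exp_smul_involution N G hG2 (-(Complex.I * ((θ : ℂ) / 2)))
  have ht : -(Complex.I * ((θ : ℂ) / 2)) = -((((θ / 2 : ℝ)) : ℂ) * Complex.I) := by
    push_cast; ring
  have hc : Complex.cosh (-(Complex.I * ((θ : ℂ) / 2))) = ((Real.cos (θ / 2) : ℝ) : ℂ) := by
    rw [ht, Complex.cosh_neg, Complex.cosh_mul_I, Complex.ofReal_cos]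
  have hs : Complex.sinh (-(Complex.I * ((θ : ℂ) / 2))) = -(((Real.sin (θ / 2) : ℝ) : ℂ) * Complex.I) := by
    rw [ht, Complex.sinh_neg, Complex.sinh_mul_I, Complex.ofReal_sin]
  rw [hexp, hc, hs]
  set c : ℝ := Real.cos (θ / 2)
  set s : ℝ := Real.sin (θ / 2)
  have hU : ((c : ℂ) • (1 : Matrix (Fin N) (Fin N) ℂ) + (-((s : ℂ) * Complex.I)) • G).mulVec ψ
      = (c : ℂ) • ψ + (-((s : ℂ) * Complex.I)) • φ := by
    rw [add_mulVec, smul_mulVec, smul_mulVec, one_mulVec, hφ]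
  rw [hU]
  simp only [star_add, star_smul, add_dotProduct, dotProduct_add, mulVec_add, mulVec_smul,
    dotProduct_smul, smul_dotProduct, smul_eq_mul, star_mul', star_neg, Complex.star_def,
    Complex.conj_ofReal, Complex.conj_I]
  rw [← hz11, ← hz22, ← hz12, ← hz21, h21]
  have hcos : Real.cos θ = 2 * c ^ 2 - 1 := by
    rw [show θ = 2 * (θ / 2) by ring, Real.cos_two_mul]
  have hsin : Real.sin θ = 2 * s * c := by
    rw [show θ = 2 * (θ / 2) by ring, Real.sin_two_mul]
  have hsc : s ^ 2 + c ^ 2 = 1 := Real.sin_sq_add_cos_sq _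
  set p : ℝ := z12.re with hp
  set q : ℝ := z12.im with hq
  have hz : z12 = (p : ℂ) + (q : ℂ) * Complex.I := (Complex.re_add_im z12).symm
  have hzs : star z12 = (p : ℂ) - (q : ℂ) * Complex.I := by
    rw [Complex.star_def, hz]
    simp [Complex.ext_iff]
  rw [h11, h22, hzs, hz]
  simp only [Complex.ofReal_re]
  rw [hcos, hsin]
  push_cast
  have hsc' : ((s : ℂ)) ^ 2 + ((c : ℂ)) ^ 2 = 1 := by
    have : (((s ^ 2 + c ^ 2 : ℝ)) : ℂ) = ((1 : ℝ) : ℂ) := by rw [hsc]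
    push_cast at this
    exact_mod_cast this
  linear_combination (-(2 * (c:ℂ) * (s:ℂ) * (q:ℂ)) - (s:ℂ)^2 * ((z22.re:ℝ):ℂ)) * Complex.I_sq + ((z22.re:ℝ):ℂ) * hsc'
end

section
/- Let d ≥ 2 and N_D be positive integers, λ ≥ 0, and for k = 1, …, N_D let ŷ_k : ℝ^d → ℝ be twice continuously differentiable with ŷ_k(θ) ∈ [0,1], |∂_j ŷ_k(θ)| ≤ 1 and |∂_j ∂_l ŷ_k(θ)| ≤ 1 for all θ and all indices j, l, and let labels y_k ∈ [0,1]. Define the regularized MSE loss L(θ) = (1/(2N_D)) Σ_k (ŷ_k(θ) − y_k)² + (λ/2)‖θ‖₂². Then the gradient ∇L is Lipschitz on ℝ^d with Lipschitz constant S = (3/2 + λ)·d², i.e., L is S-smooth with S = (3/2 + λ)d². -/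
open Real

lemma sum_abs_le_sqrt_norm {d : ℕ} (u : EuclideanSpace ℝ (Fin d)) :
    ∑ j, |u j| ≤ Real.sqrt d * ‖u‖ := by
  have h1 : (∑ j, |u j|) ^ 2 ≤ (d : ℝ) * ∑ j, |u j| ^ 2 := by
    simpa using sq_sum_le_card_mul_sum_sq (s := Finset.univ) (f := fun j => |u j|)
  have h2 : ‖u‖ = Real.sqrt (∑ j, |u j| ^ 2) := by
    rw [EuclideanSpace.norm_eq]; simp [Real.norm_eq_abs]
  have h3 : ∑ j, |u j| = Real.sqrt ((∑ j, |u j|) ^ 2) := by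
    rw [Real.sqrt_sq (by positivity)]
  rw [h3, h2, ← Real.sqrt_mul (by positivity)]
  exact Real.sqrt_le_sqrt h1

lemma euclidean_decomp {d : ℕ} (u : EuclideanSpace ℝ (Fin d)) :
    u = ∑ j, u j • EuclideanSpace.single j (1 : ℝ) := by
  have := (EuclideanSpace.basisFun (Fin d) ℝ).sum_repr u
  simpa [EuclideanSpace.basisFun_apply, EuclideanSpace.basisFun_repr] using this.symm

lemma clm_bound {d : ℕ} (φ : EuclideanSpace ℝ (Fin d) →L[ℝ] ℝ) {c : ℝ} (hc : 0 ≤ c)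
    (h : ∀ j, |φ (EuclideanSpace.single j 1)| ≤ c) (u : EuclideanSpace ℝ (Fin d)) :
    |φ u| ≤ c * (Real.sqrt d * ‖u‖) := by
  conv_lhs => rw [euclidean_decomp u, map_sum]
  calc |∑ j, φ (u j • EuclideanSpace.single j 1)|
      ≤ ∑ j, |u j| * |φ (EuclideanSpace.single j 1)| := by
        refine (Finset.abs_sum_le_sum_abs _ _).trans (Finset.sum_le_sum fun j _ => ?_)
        rw [map_smul]; simp [abs_mul]
    _ ≤ ∑ j, |u j| * c :=
        Finset.sum_le_sum fun j _ => mul_le_mul_of_nonneg_left (h j) (abs_nonneg _)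
    _ = c * ∑ j, |u j| := by rw [← Finset.sum_mul, mul_comm]
    _ ≤ c * (Real.sqrt d * ‖u‖) :=
        mul_le_mul_of_nonneg_left (sum_abs_le_sqrt_norm u) hc

noncomputable def innerCLM (d : ℕ) :
    EuclideanSpace ℝ (Fin d) →L[ℝ] EuclideanSpace ℝ (Fin d) →L[ℝ] ℝ := innerSL ℝ

@[simp] lemma innerCLM_apply {d : ℕ} (u v : EuclideanSpace ℝ (Fin d)) :
    innerCLM d u v = inner ℝ u v := rfl

noncomputable def Dmap (d ND : ℕ) (yhat : Fin ND → EuclideanSpace ℝ (Fin d) → ℝ)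
    (y : Fin ND → ℝ) (lam : ℝ) (θ : EuclideanSpace ℝ (Fin d)) :
    EuclideanSpace ℝ (Fin d) →L[ℝ] ℝ :=
  ((ND : ℝ))⁻¹ • (∑ k, (yhat k θ - y k) • fderiv ℝ (yhat k) θ) + lam • (innerCLM d θ)

noncomputable def Bmap (d ND : ℕ) (yhat : Fin ND → EuclideanSpace ℝ (Fin d) → ℝ)
    (y : Fin ND → ℝ) (lam : ℝ) (θ : EuclideanSpace ℝ (Fin d)) :
    EuclideanSpace ℝ (Fin d) →L[ℝ] EuclideanSpace ℝ (Fin d) →L[ℝ] ℝ :=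
  ((ND : ℝ))⁻¹ • (∑ k, ((yhat k θ - y k) • fderiv ℝ (fderiv ℝ (yhat k)) θ
      + (fderiv ℝ (yhat k) θ).smulRight (fderiv ℝ (yhat k) θ)))
    + lam • (innerCLM d)

set_option maxHeartbeats 1000000 in
/-- The regularized MSE loss `L(θ) = (1/(2 N_D)) ∑ₖ (ŷₖ(θ) - yₖ)² + (λ/2) ‖θ‖₂²` is
`S`-smooth with `S = (3/2 + λ) d²`: its gradient is Lipschitz with constant `(3/2 + λ) d²`. -/
theorem mse_loss_smooth (d ND : ℕ) (hd : 2 ≤ d) (hND : 0 < ND)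
    (lam : ℝ) (hlam : 0 ≤ lam)
    (yhat : Fin ND → EuclideanSpace ℝ (Fin d) → ℝ) (y : Fin ND → ℝ)
    (hsmooth : ∀ k, ContDiff ℝ 2 (yhat k))
    (hrange : ∀ k θ, yhat k θ ∈ Set.Icc (0 : ℝ) 1)
    (hpartial1 : ∀ k (θ : EuclideanSpace ℝ (Fin d)) (j : Fin d),
      |fderiv ℝ (yhat k) θ (EuclideanSpace.single j 1)| ≤ 1)
    (hpartial2 : ∀ k (θ : EuclideanSpace ℝ (Fin d)) (j l : Fin d),
      |fderiv ℝ (fun θ' : EuclideanSpace ℝ (Fin d) =>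
          fderiv ℝ (yhat k) θ' (EuclideanSpace.single l 1)) θ (EuclideanSpace.single j 1)| ≤ 1)
    (hy : ∀ k, y k ∈ Set.Icc (0 : ℝ) 1)
    (L : EuclideanSpace ℝ (Fin d) → ℝ)
    (hL : ∀ θ, L θ = (1 / (2 * ND)) * ∑ k, (yhat k θ - y k) ^ 2 + (lam / 2) * ‖θ‖ ^ 2) :
    LipschitzWith (Real.toNNReal ((3 / 2 + lam) * d ^ 2)) (gradient L) := by
  have hND' : (ND : ℝ) ≠ 0 := Nat.cast_ne_zero.2 hND.ne'
  have hLfun : L = fun θ => (1 / (2 * ND)) * ∑ k, (yhat k θ - y k) ^ 2 + (lam / 2) * ‖θ‖ ^ 2 :=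
    funext hL
  have hdiff : ∀ k, Differentiable ℝ (yhat k) := fun k => (hsmooth k).differentiable (by norm_num)
  have hdiff' : ∀ k, Differentiable ℝ (fderiv ℝ (yhat k)) :=
    fun k => ((hsmooth k).fderiv_right (m := 1) (by norm_num)).differentiable (by norm_num)
  have hfd : ∀ θ, HasFDerivAt L (Dmap d ND yhat y lam θ) θ := by
    intro θ
    rw [hLfun]
    have h1 : ∀ k : Fin ND, HasFDerivAt (fun θ' => (yhat k θ' - y k) ^ 2)
        ((yhat k θ - y k) • fderiv ℝ (yhat k) θ + (yhat k θ - y k) • fderiv ℝ (yhat k) θ) θ := by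
      intro k
      have hk : HasFDerivAt (fun θ' => yhat k θ' - y k) (fderiv ℝ (yhat k) θ) θ :=
        ((hdiff k θ).hasFDerivAt).sub_const _
      have h2 := hk.mul hk
      convert h2 using 2 <;> try rfl
      simp only [Pi.mul_apply]
      ring
    have hsum := HasFDerivAt.sum (u := Finset.univ) (fun k _ => h1 k)
    have hs1 := hsum.const_mul (1 / (2 * (ND : ℝ)))
    have hn : HasFDerivAt (fun θ' : EuclideanSpace ℝ (Fin d) => ‖θ'‖ ^ 2)
        (2 • (innerSL ℝ θ)) θ := by
      simpa using (hasFDerivAt_id θ).norm_sq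
    have hs2 := hn.const_mul (lam / 2)
    convert hs1.add hs2 using 1 <;> try rfl
    · ext θ'
      simp only [Pi.add_apply, Finset.sum_apply]
    ext v
    simp only [Dmap, innerCLM, ContinuousLinearMap.add_apply, ContinuousLinearMap.smul_apply,
      ContinuousLinearMap.coe_sum', Finset.sum_apply, smul_eq_mul, nsmul_eq_mul]
    rw [Finset.mul_sum, Finset.mul_sum]
    congr 1
    · exact Finset.sum_congr rfl fun k _ => by field_simp; ring
    · ring
  have hGD : fderiv ℝ L = Dmap d ND yhat y lam := funext fun θ => (hfd θ).fderiv
  have hfd2 : ∀ θ, HasFDerivAt (Dmap d ND yhat y lam) (Bmap d ND yhat y lam θ) θ := by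
    intro θ
    have h1 : ∀ k : Fin ND, HasFDerivAt
        (fun θ' => (yhat k θ' - y k) • fderiv ℝ (yhat k) θ')
        ((yhat k θ - y k) • fderiv ℝ (fderiv ℝ (yhat k)) θ
          + (fderiv ℝ (yhat k) θ).smulRight (fderiv ℝ (yhat k) θ)) θ :=
      fun k => (((hdiff k θ).hasFDerivAt).sub_const _).smul ((hdiff' k θ).hasFDerivAt)
    have hsum := (HasFDerivAt.sum (u := Finset.univ) (fun k _ => h1 k)).const_smul ((ND : ℝ))⁻¹
    have h2 : HasFDerivAt (fun θ' : EuclideanSpace ℝ (Fin d) => lam • (innerCLM d θ'))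
        (lam • (innerCLM d)) θ :=
      (innerCLM d).hasFDerivAt.const_smul lam
    convert hsum.add h2 using 1 <;> try rfl
    funext θ'
    simp only [Dmap, Pi.add_apply, Pi.smul_apply, Finset.sum_apply]
  have hH : ∀ k θ (j l : Fin d),
      |fderiv ℝ (fderiv ℝ (yhat k)) θ (EuclideanSpace.single j 1)
        (EuclideanSpace.single l 1)| ≤ 1 := by
    intro k θ j l
    have h2 := hpartial2 k θ j l
    have he : fderiv ℝ (fun θ' : EuclideanSpace ℝ (Fin d) =>
          fderiv ℝ (yhat k) θ' (EuclideanSpace.single l 1)) θ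
        = (fderiv ℝ (fderiv ℝ (yhat k)) θ).flip (EuclideanSpace.single l 1) := by
      rw [fderiv_clm_apply (hdiff' k θ) (differentiableAt_const _)]
      simp
    rw [he] at h2
    simpa using h2
  have hHnorm : ∀ k θ (u v : EuclideanSpace ℝ (Fin d)),
      |fderiv ℝ (fderiv ℝ (yhat k)) θ u v| ≤ (Real.sqrt d * ‖u‖) * (Real.sqrt d * ‖v‖) := by
    intro k θ u v
    have hrow : ∀ l : Fin d,
        |fderiv ℝ (fderiv ℝ (yhat k)) θ u (EuclideanSpace.single l 1)| ≤ Real.sqrt d * ‖u‖ := by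
      intro l
      have := clm_bound ((fderiv ℝ (fderiv ℝ (yhat k)) θ).flip (EuclideanSpace.single l 1))
        zero_le_one (fun j => by simpa using hH k θ j l) u
      simpa using this
    have := clm_bound (fderiv ℝ (fderiv ℝ (yhat k)) θ u)
      (by positivity : (0:ℝ) ≤ Real.sqrt d * ‖u‖) (fun l => hrow l) v
    exact this
  have hD1 : ∀ k θ (u : EuclideanSpace ℝ (Fin d)),
      |fderiv ℝ (yhat k) θ u| ≤ Real.sqrt d * ‖u‖ := by
    intro k θ u
    have := clm_bound (fderiv ℝ (yhat k) θ) zero_le_one (fun j => hpartial1 k θ j) u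
    simpa using this
  have habs : ∀ k θ, |yhat k θ - y k| ≤ 1 := by
    intro k θ
    have h1 := hrange k θ
    have h2 := hy k
    rw [Set.mem_Icc] at h1 h2
    rw [abs_le]; constructor <;> [linarith [h1.1, h2.2]; linarith [h1.2, h2.1]]
  have hS0 : (0 : ℝ) ≤ (3 / 2 + lam) * d ^ 2 := by positivity
  have hB : ∀ θ, ‖Bmap d ND yhat y lam θ‖ ≤ (3 / 2 + lam) * d ^ 2 := by
    intro θ
    refine ContinuousLinearMap.opNorm_le_bound _ hS0 fun u => ?_
    refine ContinuousLinearMap.opNorm_le_bound _ (by positivity) fun v => ?_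
    have hsq : Real.sqrt d * Real.sqrt d = d := Real.mul_self_sqrt (Nat.cast_nonneg d)
    have e3 : (Real.sqrt d * ‖u‖) * (Real.sqrt d * ‖v‖) = d * (‖u‖ * ‖v‖) := by
      calc (Real.sqrt d * ‖u‖) * (Real.sqrt d * ‖v‖)
          = (Real.sqrt d * Real.sqrt d) * (‖u‖ * ‖v‖) := by ring
        _ = d * (‖u‖ * ‖v‖) := by rw [hsq]
    have key : ∀ k : Fin ND,
        |(yhat k θ - y k) * (fderiv ℝ (fderiv ℝ (yhat k)) θ u v)
          + (fderiv ℝ (yhat k) θ u) * (fderiv ℝ (yhat k) θ v)|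
        ≤ 2 * d * (‖u‖ * ‖v‖) := by
      intro k
      have h1 := hHnorm k θ u v
      have h2 := hD1 k θ u
      have h3 := hD1 k θ v
      have h4 := habs k θ
      have e1 : |(yhat k θ - y k) * (fderiv ℝ (fderiv ℝ (yhat k)) θ u v)|
          ≤ 1 * ((Real.sqrt d * ‖u‖) * (Real.sqrt d * ‖v‖)) := by
        rw [abs_mul]
        exact mul_le_mul h4 h1 (abs_nonneg _) zero_le_one
      have e2 : |(fderiv ℝ (yhat k) θ u) * (fderiv ℝ (yhat k) θ v)|
          ≤ (Real.sqrt d * ‖u‖) * (Real.sqrt d * ‖v‖) := by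
        rw [abs_mul]
        exact mul_le_mul h2 h3 (abs_nonneg _) (by positivity)
      calc |(yhat k θ - y k) * (fderiv ℝ (fderiv ℝ (yhat k)) θ u v)
          + (fderiv ℝ (yhat k) θ u) * (fderiv ℝ (yhat k) θ v)|
          ≤ |(yhat k θ - y k) * (fderiv ℝ (fderiv ℝ (yhat k)) θ u v)|
            + |(fderiv ℝ (yhat k) θ u) * (fderiv ℝ (yhat k) θ v)| := abs_add_le _ _
        _ ≤ 1 * ((Real.sqrt d * ‖u‖) * (Real.sqrt d * ‖v‖))
            + (Real.sqrt d * ‖u‖) * (Real.sqrt d * ‖v‖) := add_le_add e1 e2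
        _ = 2 * d * (‖u‖ * ‖v‖) := by rw [one_mul, e3]; ring
    have happ : Bmap d ND yhat y lam θ u v
        = (ND : ℝ)⁻¹ * (∑ k, ((yhat k θ - y k) * (fderiv ℝ (fderiv ℝ (yhat k)) θ u v)
          + (fderiv ℝ (yhat k) θ u) * (fderiv ℝ (yhat k) θ v))) + lam * (inner ℝ u v : ℝ) := by
      simp only [Bmap, ContinuousLinearMap.add_apply, ContinuousLinearMap.smul_apply,
        ContinuousLinearMap.coe_sum', Finset.sum_apply, ContinuousLinearMap.smulRight_apply,
        smul_eq_mul, innerCLM_apply]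
    have hsum : |∑ k, ((yhat k θ - y k) * (fderiv ℝ (fderiv ℝ (yhat k)) θ u v)
          + (fderiv ℝ (yhat k) θ u) * (fderiv ℝ (yhat k) θ v))|
        ≤ (ND : ℝ) * (2 * d * (‖u‖ * ‖v‖)) := by
      refine (Finset.abs_sum_le_sum_abs _ _).trans ?_
      calc ∑ k : Fin ND, |(yhat k θ - y k) * (fderiv ℝ (fderiv ℝ (yhat k)) θ u v)
            + (fderiv ℝ (yhat k) θ u) * (fderiv ℝ (yhat k) θ v)|
          ≤ ∑ _k : Fin ND, 2 * d * (‖u‖ * ‖v‖) := Finset.sum_le_sum fun k _ => key k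
        _ = (ND : ℝ) * (2 * d * (‖u‖ * ‖v‖)) := by
            rw [Finset.sum_const]; simp [mul_comm]
    have hinner : |(inner ℝ u v : ℝ)| ≤ ‖u‖ * ‖v‖ := abs_real_inner_le_norm u v
    have hcoef : 2 * (d : ℝ) + lam ≤ (3 / 2 + lam) * d ^ 2 := by
      have hd2 : (2 : ℝ) ≤ d := by exact_mod_cast hd
      have hdd : (1 : ℝ) ≤ (d : ℝ) ^ 2 := by nlinarith
      have h2' : lam * 1 ≤ lam * (d : ℝ) ^ 2 := mul_le_mul_of_nonneg_left hdd hlam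
      nlinarith [h2']
    rw [Real.norm_eq_abs, happ]
    have hNDpos : (0 : ℝ) < ND := by exact_mod_cast hND
    calc |(ND : ℝ)⁻¹ * (∑ k, ((yhat k θ - y k) * (fderiv ℝ (fderiv ℝ (yhat k)) θ u v)
            + (fderiv ℝ (yhat k) θ u) * (fderiv ℝ (yhat k) θ v))) + lam * (inner ℝ u v : ℝ)|
        ≤ (ND : ℝ)⁻¹ * ((ND : ℝ) * (2 * d * (‖u‖ * ‖v‖))) + lam * (‖u‖ * ‖v‖) := by
          refine (abs_add_le _ _).trans (add_le_add ?_ ?_)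
          · rw [abs_mul, abs_of_pos (inv_pos.2 hNDpos)]
            exact mul_le_mul_of_nonneg_left hsum (by positivity)
          · rw [abs_mul, abs_of_nonneg hlam]
            exact mul_le_mul_of_nonneg_left hinner hlam
      _ = (2 * d + lam) * (‖u‖ * ‖v‖) := by field_simp
      _ ≤ ((3 / 2 + lam) * d ^ 2) * (‖u‖ * ‖v‖) :=
          mul_le_mul_of_nonneg_right hcoef (by positivity)
      _ = (3 / 2 + lam) * d ^ 2 * ‖u‖ * ‖v‖ := by ring
  have hlip : LipschitzWith (Real.toNNReal ((3 / 2 + lam) * d ^ 2)) (fderiv ℝ L) := by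
    apply lipschitzWith_of_nnnorm_fderiv_le (𝕜 := ℝ)
    · rw [hGD]; exact fun θ => (hfd2 θ).differentiableAt
    · intro θ
      rw [hGD, (hfd2 θ).fderiv, ← NNReal.coe_le_coe, coe_nnnorm, Real.coe_toNNReal _ hS0]
      exact hB θ
  have h2 := ((InnerProductSpace.toDual ℝ (EuclideanSpace ℝ (Fin d))).symm.lipschitz.comp hlip)
  have hg : gradient L = fun x =>
      (InnerProductSpace.toDual ℝ (EuclideanSpace ℝ (Fin d))).symm (fderiv ℝ L x) := rfl
  rw [hg]
  convert h2 using 1 <;> try rfl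
  rw [one_mul]
end

section
/- One-step descent with multiplicatively biased gradients: let d be a positive integer, S > 0, and let L : ℝ^d → ℝ be differentiable with ∇L Lipschitz with constant S. Fix θ ∈ ℝ^d and let g ∈ ℝ^d have components g_j = a_j · ∂_j L(θ) + c_j, where 0 ≤ a_j ≤ 1 and |c_j| ≤ B for all j. Then L(θ − (1/S)·g) ≤ L(θ) − (1/(2S)) Σ_j a_j (∂_j L(θ))² + (1/S) Σ_j (1 − a_j)·B·|∂_j L(θ)| + (d·B²)/(2S). -/
open InnerProductSpace

/-- Descent lemma: a function with `S`-Lipschitz gradient admits a quadratic upper bound. -/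
lemma descent_lemma {F : Type*} [NormedAddCommGroup F] [InnerProductSpace ℝ F] [CompleteSpace F]
    (f : F → ℝ) (hdiff : Differentiable ℝ f) (S : ℝ) (hS : 0 < S)
    (hlip : LipschitzWith S.toNNReal (gradient f)) (x v : F) :
    f (x + v) ≤ f x + ⟪gradient f x, v⟫_ℝ + S / 2 * ‖v‖ ^ 2 := by
  set ψ : ℝ → ℝ := fun t => f (x + t • v) - t * ⟪gradient f x, v⟫_ℝ - S / 2 * t ^ 2 * ‖v‖ ^ 2
    with hψ
  have hline : ∀ t : ℝ, HasDerivAt (fun t : ℝ => x + t • v) v t := by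
    intro t
    simpa using ((hasDerivAt_id t).smul_const v).const_add x
  have hφ : ∀ t : ℝ, HasDerivAt (fun t => f (x + t • v))
      (⟪gradient f (x + t • v), v⟫_ℝ) t := by
    intro t
    have h1 := (hdiff (x + t • v)).hasGradientAt.hasFDerivAt.comp_hasDerivAt t (hline t)
    exact h1.congr_deriv (by simp [InnerProductSpace.toDual_apply_apply])
  have hψ' : ∀ t : ℝ, HasDerivAt ψ
      (⟪gradient f (x + t • v), v⟫_ℝ - ⟪gradient f x, v⟫_ℝ - S * t * ‖v‖ ^ 2) t := by
    intro t
    have h2 : HasDerivAt (fun t : ℝ => t * ⟪gradient f x, v⟫_ℝ) (⟪gradient f x, v⟫_ℝ) t := by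
      simpa using (hasDerivAt_id t).mul_const _
    have h3 : HasDerivAt (fun t : ℝ => S / 2 * t ^ 2 * ‖v‖ ^ 2) (S * t * ‖v‖ ^ 2) t := by
      have := ((hasDerivAt_pow 2 t).const_mul (S / 2)).mul_const (‖v‖ ^ 2)
      refine this.congr_deriv ?_
      ring
    exact ((hφ t).sub h2).sub h3
  have hderiv_nonpos : ∀ t ∈ Set.Ioo (0 : ℝ) 1, deriv ψ t ≤ 0 := by
    intro t ht
    rw [(hψ' t).deriv]
    have h4 : ⟪gradient f (x + t • v) - gradient f x, v⟫_ℝ ≤ S * t * ‖v‖ ^ 2 := by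
      calc ⟪gradient f (x + t • v) - gradient f x, v⟫_ℝ
          ≤ ‖gradient f (x + t • v) - gradient f x‖ * ‖v‖ := real_inner_le_norm _ _
        _ ≤ S * t * ‖v‖ ^ 2 := by
            have h5 : ‖gradient f (x + t • v) - gradient f x‖ ≤ S * (t * ‖v‖) := by
              have := hlip.dist_le_mul (x + t • v) x
              rw [dist_eq_norm] at this
              simpa [Real.coe_toNNReal _ hS.le, norm_smul, abs_of_pos ht.1] using this
            nlinarith [norm_nonneg v, norm_nonneg (gradient f (x + t • v) - gradient f x),
              ht.1.le]
    rw [inner_sub_left] at h4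
    linarith
  have hcont : ContinuousOn ψ (Set.Icc 0 1) :=
    (fun t _ => ((hψ' t).differentiableAt.continuousAt).continuousWithinAt)
  have hanti : AntitoneOn ψ (Set.Icc (0:ℝ) 1) := by
    apply antitoneOn_of_deriv_nonpos (convex_Icc 0 1) hcont
    · intro t ht
      rw [interior_Icc] at ht
      exact (hψ' t).differentiableAt.differentiableWithinAt
    · intro t ht
      rw [interior_Icc] at ht
      exact hderiv_nonpos t ht
  have h01 := hanti (Set.left_mem_Icc.2 zero_le_one) (Set.right_mem_Icc.2 zero_le_one)
    zero_le_one
  simp only [hψ] at h01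
  simp only [zero_smul, add_zero, one_smul] at h01
  nlinarith [h01]

/-- One-step descent with multiplicatively biased gradients: if `L` is differentiable with
`S`-Lipschitz gradient and the descent direction has components
`gⱼ = aⱼ ∂ⱼL(θ) + cⱼ` with `0 ≤ aⱼ ≤ 1` and `|cⱼ| ≤ B`, then
`L(θ - (1/S) g) ≤ L(θ) - (1/(2S)) ∑ⱼ aⱼ (∂ⱼL(θ))² + (1/S) ∑ⱼ (1 - aⱼ) B |∂ⱼL(θ)| + dB²/(2S)`. -/
theorem one_step_biased_descent (d : ℕ) (hd : 0 < d) (S : ℝ) (hS : 0 < S)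
    (L : EuclideanSpace ℝ (Fin d) → ℝ) (hdiff : Differentiable ℝ L)
    (hlip : LipschitzWith S.toNNReal (gradient L))
    (θ g : EuclideanSpace ℝ (Fin d)) (a c : Fin d → ℝ) (B : ℝ)
    (ha0 : ∀ j, 0 ≤ a j) (ha1 : ∀ j, a j ≤ 1) (hc : ∀ j, |c j| ≤ B)
    (hg : ∀ j, g j = a j * gradient L θ j + c j) :
    L (θ - (1 / S) • g) ≤
      L θ - (1 / (2 * S)) * ∑ j, a j * (gradient L θ j) ^ 2 +
        (1 / S) * ∑ j, (1 - a j) * B * |gradient L θ j| + d * B ^ 2 / (2 * S) := by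
  set D : Fin d → ℝ := fun j => gradient L θ j with hD
  have hdesc := descent_lemma L hdiff S hS hlip θ (-(1 / S) • g)
  rw [neg_smul, ← sub_eq_add_neg] at hdesc
  -- rewrite in coordinates
  have hinner : ⟪gradient L θ, -((1 / S) • g)⟫_ℝ = -(1 / S) * ∑ j, D j * g j := by
    rw [inner_neg_right, real_inner_smul_right, PiLp.inner_apply]
    simp [hD, RCLike.inner_apply]
    exact Or.inl (Finset.sum_congr rfl fun j _ => mul_comm _ _)
  have hnorm : ‖-((1 / S) • g)‖ ^ 2 = (1 / S) ^ 2 * ∑ j, (g j) ^ 2 := by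
    rw [norm_neg, ← real_inner_self_eq_norm_sq, real_inner_smul_right, real_inner_smul_left,
      PiLp.inner_apply]
    simp only [RCLike.inner_apply, conj_trivial]
    simp only [Finset.mul_sum]
    exact Finset.sum_congr rfl fun j _ => by ring
  rw [hinner, hnorm] at hdesc
  -- per-coordinate inequality
  have key : ∀ j, -2 * D j * g j + (g j) ^ 2 ≤
      -(a j) * (D j) ^ 2 + 2 * (1 - a j) * B * |D j| + B ^ 2 := by
    intro j
    rw [hg j]
    have h1 : (c j) ^ 2 ≤ B ^ 2 := sq_le_sq' (neg_le_of_abs_le (hc j)) (le_of_abs_le (hc j))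
    have h2 : -(c j * D j) ≤ B * |D j| := by
      calc -(c j * D j) ≤ |c j * D j| := neg_le_abs _
        _ = |c j| * |D j| := abs_mul _ _
        _ ≤ B * |D j| := by
            exact mul_le_mul_of_nonneg_right (hc j) (abs_nonneg _)
    have h3 : 0 ≤ 1 - a j := by linarith [ha1 j]
    have h4 := mul_le_mul_of_nonneg_left h2 h3
    have h5 : 0 ≤ a j * (1 - a j) * (D j) ^ 2 :=
      mul_nonneg (mul_nonneg (ha0 j) h3) (sq_nonneg _)
    have h6 : (D j) ^ 2 = |D j| ^ 2 := (sq_abs _).symm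
    nlinarith [h4, h5, h1]
  have hsum : ∑ j, (-2 * D j * g j + (g j) ^ 2) ≤
      ∑ j, (-(a j) * (D j) ^ 2 + 2 * (1 - a j) * B * |D j| + B ^ 2) :=
    Finset.sum_le_sum fun j _ => key j
  -- expand sums
  have e1 : ∑ j, (-2 * D j * g j + (g j) ^ 2) =
      -2 * ∑ j, D j * g j + ∑ j, (g j) ^ 2 := by
    rw [Finset.sum_add_distrib]
    congr 1
    rw [Finset.mul_sum]
    exact Finset.sum_congr rfl fun j _ => by ring
  have e2 : ∑ j, (-(a j) * (D j) ^ 2 + 2 * (1 - a j) * B * |D j| + B ^ 2) =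
      -∑ j, a j * (D j) ^ 2 + 2 * ∑ j, (1 - a j) * B * |D j| + (d : ℝ) * B ^ 2 := by
    rw [Finset.sum_add_distrib, Finset.sum_add_distrib, Finset.sum_const, Finset.card_univ,
      Fintype.card_fin, nsmul_eq_mul]
    congr 2
    · rw [← Finset.sum_neg_distrib]
      exact Finset.sum_congr rfl fun j _ => by ring
    · rw [Finset.mul_sum]
      exact Finset.sum_congr rfl fun j _ => by ring
  rw [e1, e2] at hsum
  have hS' : (0:ℝ) < 1 / (2 * S) := by positivity
  have hfin := mul_le_mul_of_nonneg_left hsum hS'.le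
  calc L (θ - (1 / S) • g)
      ≤ L θ + -(1 / S) * ∑ j, D j * g j + S / 2 * ((1 / S) ^ 2 * ∑ j, (g j) ^ 2) := hdesc
    _ = L θ + 1 / (2 * S) * (-2 * ∑ j, D j * g j + ∑ j, (g j) ^ 2) := by
        field_simp
        ring
    _ ≤ L θ + 1 / (2 * S) * (-∑ j, a j * (D j) ^ 2 + 2 * ∑ j, (1 - a j) * B * |D j|
          + (d : ℝ) * B ^ 2) := by linarith
    _ = L θ - (1 / (2 * S)) * ∑ j, a j * (D j) ^ 2 +
        (1 / S) * ∑ j, (1 - a j) * B * |D j| + (d : ℝ) * B ^ 2 / (2 * S) := by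
        field_simp
        ring_nf
        simp only [mul_comm]
end
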